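/- arXiv:1803.01298 — 2 statements merged into one kernel-verified Lean document; each statement's English description precedes it below -/
import Mathlib

section
/- Let f : ℝⁿ → ℝ be convex and differentiable with L-Lipschitz gradient, ψ : ℝⁿ → ℝ ∪ {+∞} convex, proper, and closed, F = f + ψ, with nonempty solution set Ω and optimal value F*. Suppose R₀ := sup{ dist(x, Ω) : F(x) ≤ F(x⁰) } < ∞, and let M > 0, γ ∈ (0,1), η ∈ [0,1). Consider sequences x^{k+1} = x^k + α_k d^k with α_k ∈ (0,1], symmetric positive semidefinite matrices H_k with ‖H_k‖ ≤ M, where for each k the direction d^k satisfies Q_k(d^k) ≤ (1 − η)Q_k* for the model Q_k at x^k with matrix H_k, and the Armijo condition F(x^{k+1}) ≤ F(x^k) + α_kγΔ_k holds with Δ_k = ∇f(x^k)ᵀd^k + ψ(x^k + d^k) − ψ(x^k). If k₀ is an index with F(x^{k₀}) − F* < M R₀², then for all k ≥ k₀, F(x^k) − F* ≤ 2M R₀² / (γ(1 − η) Σ_{t=k₀}^{k−1} α_t + 2). -/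
/-
Setting: minimize F = f + ψ over ℝⁿ (modeled as `EuclideanSpace ℝ (Fin n)`), where
f : ℝⁿ → ℝ is smooth and ψ : ℝⁿ → ℝ ∪ {+∞} (modeled as `EReal`-valued, never ⊥)
is convex, proper and closed.  The quadratic model at x with symmetric operator H is
Q(d) = ⟪∇f(x), d⟫ + (1/2)⟪H d, d⟫ + ψ(x+d) − ψ(x), and Δ(d) = ⟪∇f(x), d⟫ + ψ(x+d) − ψ(x).
-/

open scoped RealInnerProductSpace
open Set Filter Topology

noncomputable section

/-- Convexity for extended-real-valued functions (values in ℝ ∪ {±∞}). -/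
def ConvexE {n : ℕ} (g : EuclideanSpace ℝ (Fin n) → EReal) : Prop :=
  ∀ x y : EuclideanSpace ℝ (Fin n), ∀ a b : ℝ, 0 ≤ a → 0 ≤ b → a + b = 1 →
    g (a • x + b • y) ≤ (a : EReal) * g x + (b : EReal) * g y

/-- ψ is proper: it never takes the value −∞ (its values lie in ℝ ∪ {+∞})
and it is finite somewhere. -/
def ProperPsi {n : ℕ} (ψ : EuclideanSpace ℝ (Fin n) → EReal) : Prop :=
  (∀ x, ψ x ≠ ⊥) ∧ ∃ x, ψ x ≠ ⊤

/-- ψ is closed, i.e. lower semicontinuous. -/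
def ClosedPsi {n : ℕ} (ψ : EuclideanSpace ℝ (Fin n) → EReal) : Prop :=
  LowerSemicontinuous ψ

/-- H is a symmetric (self-adjoint) linear operator. -/
def SymmCLM {n : ℕ} (H : EuclideanSpace ℝ (Fin n) →L[ℝ] EuclideanSpace ℝ (Fin n)) : Prop :=
  ∀ u v, ⟪H u, v⟫ = ⟪u, H v⟫

/-- m is the smallest eigenvalue of the symmetric operator H
(characterized as the minimum of the Rayleigh quotient over the unit sphere). -/
def IsSmallestEigenvalue {n : ℕ} (H : EuclideanSpace ℝ (Fin n) →L[ℝ] EuclideanSpace ℝ (Fin n))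
    (m : ℝ) : Prop :=
  IsLeast {r : ℝ | ∃ u : EuclideanSpace ℝ (Fin n), ‖u‖ = 1 ∧ r = ⟪H u, u⟫} m

/-- The objective F = f + ψ (extended-real-valued). -/
def Fm {n : ℕ} (f : EuclideanSpace ℝ (Fin n) → ℝ) (ψ : EuclideanSpace ℝ (Fin n) → EReal)
    (x : EuclideanSpace ℝ (Fin n)) : EReal :=
  (f x : EReal) + ψ x

/-- The quadratic model Q(d) = ∇f(x)ᵀd + (1/2)dᵀHd + ψ(x+d) − ψ(x). -/
def Qm {n : ℕ} (f : EuclideanSpace ℝ (Fin n) → ℝ) (ψ : EuclideanSpace ℝ (Fin n) → EReal)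
    (H : EuclideanSpace ℝ (Fin n) →L[ℝ] EuclideanSpace ℝ (Fin n))
    (x d : EuclideanSpace ℝ (Fin n)) : EReal :=
  ((⟪gradient f x, d⟫ + 1 / 2 * ⟪H d, d⟫ : ℝ) : EReal) + ψ (x + d) - ψ x

/-- Δ(d) = ∇f(x)ᵀd + ψ(x+d) − ψ(x). -/
def Dm {n : ℕ} (f : EuclideanSpace ℝ (Fin n) → ℝ) (ψ : EuclideanSpace ℝ (Fin n) → EReal)
    (x d : EuclideanSpace ℝ (Fin n)) : EReal :=
  ((⟪gradient f x, d⟫ : ℝ) : EReal) + ψ (x + d) - ψ x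

/-- g is σ-strongly convex: g − (σ/2)‖·‖² is convex. -/
def StrongConvexE {n : ℕ} (σ : ℝ) (g : EuclideanSpace ℝ (Fin n) → EReal) : Prop :=
  ConvexE (fun d => g d - ((σ / 2 * ‖d‖ ^ 2 : ℝ) : EReal))

/-- The solution set Ω = argmin F. -/
def SolSet {n : ℕ} (f : EuclideanSpace ℝ (Fin n) → ℝ)
    (ψ : EuclideanSpace ℝ (Fin n) → EReal) : Set (EuclideanSpace ℝ (Fin n)) :=
  {y | ∀ z, Fm f ψ y ≤ Fm f ψ z}


-- gradient inequality for convex functions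
theorem grad_ineq {n : ℕ} (f : EuclideanSpace ℝ (Fin n) → ℝ)
    (hf : Differentiable ℝ f) (hconv : ConvexOn ℝ Set.univ f)
    (x y : EuclideanSpace ℝ (Fin n)) : ⟪gradient f x, y - x⟫ ≤ f y - f x := by
  set v := y - x with hv
  have hc : HasDerivAt (fun t : ℝ => x + t • v) v 0 := by
    simpa using ((hasDerivAt_id (0:ℝ)).smul_const v).const_add x
  have hfd : HasFDerivAt f ((InnerProductSpace.toDualMap ℝ _) (gradient f x)) x :=
    hasGradientAt_iff_hasFDerivAt.1 (hf x).hasGradientAt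
  have hg : HasDerivAt (fun t : ℝ => f (x + t • v)) ⟪gradient f x, v⟫ 0 := by
    have hfd2 : HasFDerivAt f ((InnerProductSpace.toDualMap ℝ _) (gradient f x)) (x + (0:ℝ) • v) := by simpa using hfd
    have := hfd2.comp_hasDerivAt 0 hc
    simpa [InnerProductSpace.toDualMap_apply_apply, Function.comp_def] using this
  have hgc : ConvexOn ℝ Set.univ (fun t : ℝ => f (x + t • v)) := by
    have := hconv.comp_affineMap (AffineMap.lineMap x y : ℝ →ᵃ[ℝ] EuclideanSpace ℝ (Fin n))
    have heq : (f ∘ (AffineMap.lineMap x y : ℝ →ᵃ[ℝ] EuclideanSpace ℝ (Fin n)))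
        = fun t : ℝ => f (x + t • v) := by
      funext t
      simp [AffineMap.lineMap_apply, hv]
      congr 1
      abel
    rw [heq] at this
    simpa using this
  have := hgc.le_slope_of_hasDerivAt (Set.mem_univ (0:ℝ)) (Set.mem_univ (1:ℝ)) one_pos hg
  have hs : slope (fun t : ℝ => f (x + t • v)) 0 1 = f y - f x := by
    simp [slope_def_field, hv]
  rw [hs] at this
  exact this


theorem rate_step (N a α δ δ' S : ℝ) (hN : 0 < N) (ha : 0 < a) (hα : 0 < α)
    (haα : a * α ≤ 1) (hδ0 : 0 ≤ δ) (hS : 0 ≤ S)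
    (hδB : δ ≤ N / (a * S + 2))
    (hδ' : δ' ≤ δ - a * α * δ ^ 2 / N) :
    δ' ≤ N / (a * (S + α) + 2) := by
  have hA : (0:ℝ) < a * S + 2 := by positivity
  have hA' : (0:ℝ) < a * (S + α) + 2 := by positivity
  have hδN : δ * (a * S + 2) ≤ N := by rwa [le_div_iff₀ hA] at hδB
  have hαδ : a * α * δ ≤ N := by nlinarith [mul_nonneg (mul_nonneg ha.le hS) hδ0, mul_nonneg (sub_nonneg.2 haα) hδ0]
  have key : (δ - a * α * δ ^ 2 / N) * (a * (S + α) + 2) ≤ N := by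
    have h2 : δ - a * α * δ ^ 2 / N = (δ * N - a * α * δ ^ 2) / N := by
      field_simp
    rw [h2, div_mul_eq_mul_div, div_le_iff₀ hN]
    nlinarith [mul_nonneg (sub_nonneg.2 hδN) (sub_nonneg.2 hαδ), sq_nonneg (a * α * δ)]
  calc δ' ≤ δ - a * α * δ ^ 2 / N := hδ'
    _ ≤ N / (a * (S + α) + 2) := (le_div_iff₀ hA').mpr key


set_option maxHeartbeats 1000000 in
/-- Sublinear rate for convex F.  With f convex, ∇f L-Lipschitz, nonempty
solution set Ω with optimal value F*, R₀ = sup{dist(x,Ω) : F(x) ≤ F(x⁰)} finite,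
‖H_k‖ ≤ M, iterates x^{k+1} = x^k + α_k d^k with α_k ∈ (0,1], η-approximate directions
d^k and Armijo decrease at every iteration: if F(x^{k₀}) − F* < M R₀², then for all
k ≥ k₀, F(x^k) − F* ≤ 2M R₀² / (γ(1 − η) Σ_{t=k₀}^{k−1} α_t + 2). -/
theorem sublinear_rate_convex {n : ℕ}
    (f : EuclideanSpace ℝ (Fin n) → ℝ) (ψ : EuclideanSpace ℝ (Fin n) → EReal)
    (L M γ η R₀ Fstar : ℝ)
    (xseq dseq : ℕ → EuclideanSpace ℝ (Fin n)) (α : ℕ → ℝ)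
    (H : ℕ → (EuclideanSpace ℝ (Fin n) →L[ℝ] EuclideanSpace ℝ (Fin n)))
    (hf : Differentiable ℝ f) (hfconv : ConvexOn ℝ Set.univ f)
    (hL : 0 < L) (hlip : ∀ y z, ‖gradient f y - gradient f z‖ ≤ L * ‖y - z‖)
    (hψconv : ConvexE ψ) (hψproper : ProperPsi ψ) (hψclosed : ClosedPsi ψ)
    (hΩ : (SolSet f ψ).Nonempty)
    (hFstar : ∀ y ∈ SolSet f ψ, Fm f ψ y = (Fstar : EReal))
    (hM : 0 < M) (hγ0 : 0 < γ) (hγ1 : γ < 1) (hη0 : 0 ≤ η) (hη1 : η < 1)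
    (hR0 : IsLUB {r : ℝ | ∃ y, Fm f ψ y ≤ Fm f ψ (xseq 0) ∧
        r = Metric.infDist y (SolSet f ψ)} R₀)
    (hstep : ∀ k, xseq (k + 1) = xseq k + α k • dseq k)
    (hα : ∀ k, α k ∈ Set.Ioc (0 : ℝ) 1)
    (hHsymm : ∀ k, SymmCLM (H k))
    (hHpsd : ∀ k, ∀ e : EuclideanSpace ℝ (Fin n), 0 ≤ ⟪(H k) e, e⟫)
    (hHM : ∀ k, ‖H k‖ ≤ M)
    (happrox : ∀ k, Qm f ψ (H k) (xseq k) (dseq k) ≤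
        ((1 - η : ℝ) : EReal) * ⨅ e, Qm f ψ (H k) (xseq k) e)
    (harmijo : ∀ k, Fm f ψ (xseq (k + 1)) ≤
        Fm f ψ (xseq k) + ((α k * γ : ℝ) : EReal) * Dm f ψ (xseq k) (dseq k))
    (k₀ : ℕ)
    (hk₀ : Fm f ψ (xseq k₀) - (Fstar : EReal) < ((M * R₀ ^ 2 : ℝ) : EReal)) :
    ∀ k, k₀ ≤ k →
      Fm f ψ (xseq k) - (Fstar : EReal) ≤
        ((2 * M * R₀ ^ 2 / (γ * (1 - η) * (∑ t ∈ Finset.Ico k₀ k, α t) + 2) : ℝ) : EReal) := by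
  
  obtain ⟨y₀, hy₀⟩ := hΩ
  have hψbot := hψproper.1
  have hFstar0 : Fm f ψ y₀ = (Fstar : EReal) := hFstar y₀ hy₀
  have hFbot : ∀ z, Fm f ψ z ≠ ⊥ := by
    intro z h
    rcases EReal.add_eq_bot_iff.1 h with h' | h'
    · exact EReal.coe_ne_bot _ h'
    · exact hψbot z h'
  have hFlow : ∀ z, (Fstar : EReal) ≤ Fm f ψ z := fun z => hFstar0 ▸ hy₀ z
  have hane : 0 < γ * (1 - η) := mul_pos hγ0 (by linarith)
  have hDleQ : ∀ j, Dm f ψ (xseq j) (dseq j) ≤ Qm f ψ (H j) (xseq j) (dseq j) := by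
    intro j
    unfold Dm Qm
    refine EReal.sub_le_sub (add_le_add_left ?_ _) le_rfl
    rw [EReal.coe_le_coe_iff]
    nlinarith [hHpsd j (dseq j)]
  have hQ0 : ∀ j, ψ (xseq j) ≠ ⊤ → (⨅ e, Qm f ψ (H j) (xseq j) e) ≤ 0 := by
    intro j hj
    refine (iInf_le _ 0).trans_eq ?_
    obtain ⟨r, hr⟩ : ∃ r : ℝ, ψ (xseq j) = (r : EReal) :=
      ⟨_, (EReal.coe_toReal hj (hψbot _)).symm⟩
    show ((⟪gradient f (xseq j), 0⟫ + 1 / 2 * ⟪(H j) 0, (0 : EuclideanSpace ℝ (Fin n))⟫ : ℝ) : EReal)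
        + ψ (xseq j + 0) - ψ (xseq j) = 0
    rw [add_zero, hr]
    have h0 : (⟪gradient f (xseq j), 0⟫ + 1 / 2 * ⟪(H j) 0, (0 : EuclideanSpace ℝ (Fin n))⟫ : ℝ) = 0 := by
      simp
    rw [h0, ← EReal.coe_add, ← EReal.coe_sub]
    norm_num
  have hDnonpos : ∀ j, ψ (xseq j) ≠ ⊤ → Dm f ψ (xseq j) (dseq j) ≤ 0 := by
    intro j hj
    refine (hDleQ j).trans ((happrox j).trans ?_)
    calc ((1 - η : ℝ) : EReal) * ⨅ e, Qm f ψ (H j) (xseq j) e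
        ≤ ((1 - η : ℝ) : EReal) * 0 :=
          mul_le_mul_of_nonneg_left (hQ0 j hj) (by exact_mod_cast (by linarith : (0:ℝ) ≤ 1 - η))
      _ = 0 := mul_zero _
  have hmono : ∀ j, Fm f ψ (xseq (j + 1)) ≤ Fm f ψ (xseq j) := by
    intro j
    by_cases hj : ψ (xseq j) = ⊤
    · have hT : Fm f ψ (xseq j) = ⊤ := by
        show ((f (xseq j) : ℝ) : EReal) + ψ (xseq j) = ⊤
        rw [hj]; exact EReal.add_top_of_ne_bot (EReal.coe_ne_bot _)
      rw [hT]; exact le_top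
    · refine (harmijo j).trans ?_
      have h1 : ((α j * γ : ℝ) : EReal) * Dm f ψ (xseq j) (dseq j) ≤ 0 := by
        calc ((α j * γ : ℝ) : EReal) * Dm f ψ (xseq j) (dseq j)
            ≤ ((α j * γ : ℝ) : EReal) * 0 :=
              mul_le_mul_of_nonneg_left (hDnonpos j hj)
                (by exact_mod_cast mul_nonneg (hα j).1.le hγ0.le)
          _ = 0 := mul_zero _
      calc Fm f ψ (xseq j) + ((α j * γ : ℝ) : EReal) * Dm f ψ (xseq j) (dseq j)
          ≤ Fm f ψ (xseq j) + 0 := add_le_add_right h1 _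
        _ = Fm f ψ (xseq j) := add_zero _
  have hmono0 : ∀ j, Fm f ψ (xseq j) ≤ Fm f ψ (xseq 0) := by
    intro j
    induction j with
    | zero => exact le_rfl
    | succ m ih => exact (hmono m).trans ih
  have hFlsc : LowerSemicontinuous (Fm f ψ) := by
    have hcf : Continuous fun z : EuclideanSpace ℝ (Fin n) => ((f z : ℝ) : EReal) :=
      continuous_coe_real_ereal.comp hf.continuous
    exact hcf.lowerSemicontinuous.add' hψclosed fun z =>
      EReal.continuousAt_add (Or.inl (EReal.coe_ne_top _)) (Or.inl (EReal.coe_ne_bot _))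
  have hΩeq : SolSet f ψ = Fm f ψ ⁻¹' Set.Iic (Fstar : EReal) := by
    ext z
    constructor
    · intro hz; exact (hFstar z hz).le
    · intro hz w; exact le_trans hz (hFlow w)
  have hΩclosed : IsClosed (SolSet f ψ) := by
    rw [hΩeq]; exact hFlsc.isClosed_preimage _
  have hdistR : ∀ j, Metric.infDist (xseq j) (SolSet f ψ) ≤ R₀ := fun j =>
    hR0.1 ⟨xseq j, hmono0 j, rfl⟩
  have hR0nonneg : 0 ≤ R₀ := Metric.infDist_nonneg.trans (hR0.1 ⟨xseq 0, le_rfl, rfl⟩)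
  have hk₀top : Fm f ψ (xseq k₀) ≠ ⊤ := by
    intro h
    rw [h, EReal.top_sub_coe] at hk₀
    exact not_top_lt hk₀
  set c₀ : ℝ := (Fm f ψ (xseq k₀)).toReal with hc₀def
  have hc₀ : Fm f ψ (xseq k₀) = (c₀ : EReal) := (EReal.coe_toReal hk₀top (hFbot _)).symm
  have hc₀low : Fstar ≤ c₀ := by
    have h := hFlow (xseq k₀); rw [hc₀] at h; exact_mod_cast h
  have hlt : c₀ - Fstar < M * R₀ ^ 2 := by
    rw [hc₀, ← EReal.coe_sub] at hk₀; exact_mod_cast hk₀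
  have hMR : 0 < M * R₀ ^ 2 := lt_of_le_of_lt (by linarith) hlt
  have hR0pos : 0 < R₀ := by
    rcases hR0nonneg.lt_or_eq with h | h
    · exact h
    · exfalso; rw [← h] at hMR; norm_num at hMR
  have hkey : ∀ j (c : ℝ), Fm f ψ (xseq j) = (c : EReal) → c - Fstar ≤ M * R₀ ^ 2 →
      (⨅ e, Qm f ψ (H j) (xseq j) e) ≤
        ((-((c - Fstar) ^ 2) / (2 * (M * R₀ ^ 2)) : ℝ) : EReal) := by
    intro j c hc hcle
    have hδ0 : 0 ≤ c - Fstar := by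
      have h := hFlow (xseq j); rw [hc] at h
      have := EReal.coe_le_coe_iff.1 h; linarith
    obtain ⟨y, hyΩ, hyd⟩ := hΩclosed.exists_infDist_eq_dist ⟨y₀, hy₀⟩ (xseq j)
    have hydR : dist (xseq j) y ≤ R₀ := hyd ▸ hdistR j
    have hψxt : ψ (xseq j) ≠ ⊤ := by
      intro h
      have hc2 : ((f (xseq j) : ℝ) : EReal) + ψ (xseq j) = (c : EReal) := hc
      rw [h, EReal.add_top_of_ne_bot (EReal.coe_ne_bot _)] at hc2
      exact EReal.coe_ne_top _ hc2.symm
    obtain ⟨px, hpx⟩ : ∃ r : ℝ, ψ (xseq j) = (r : EReal) :=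
      ⟨_, (EReal.coe_toReal hψxt (hψbot _)).symm⟩
    have hcval : c = f (xseq j) + px := by
      have hc2 : ((f (xseq j) : ℝ) : EReal) + ψ (xseq j) = (c : EReal) := hc
      rw [hpx, ← EReal.coe_add] at hc2
      exact_mod_cast hc2.symm
    have hψyt : ψ y ≠ ⊤ := by
      intro h
      have hFy : ((f y : ℝ) : EReal) + ψ y = (Fstar : EReal) := hFstar y hyΩ
      rw [h, EReal.add_top_of_ne_bot (EReal.coe_ne_bot _)] at hFy
      exact EReal.coe_ne_top _ hFy.symm
    obtain ⟨py, hpy⟩ : ∃ r : ℝ, ψ y = (r : EReal) :=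
      ⟨_, (EReal.coe_toReal hψyt (hψbot _)).symm⟩
    have hsval : Fstar = f y + py := by
      have hFy : ((f y : ℝ) : EReal) + ψ y = (Fstar : EReal) := hFstar y hyΩ
      rw [hpy, ← EReal.coe_add] at hFy
      exact_mod_cast hFy.symm
    set t : ℝ := (c - Fstar) / (M * R₀ ^ 2) with htdef
    have ht0 : 0 ≤ t := div_nonneg hδ0 hMR.le
    have ht1 : t ≤ 1 := (div_le_one hMR).mpr hcle
    set d : EuclideanSpace ℝ (Fin n) := t • (y - xseq j) with hddef
    have hnyx : ‖y - xseq j‖ ≤ R₀ := by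
      rw [← dist_eq_norm, dist_comm]; exact hydR
    have hinner : ⟪gradient f (xseq j), d⟫ ≤ t * (f y - f (xseq j)) := by
      rw [hddef, real_inner_smul_right]
      exact mul_le_mul_of_nonneg_left (grad_ineq f hf hfconv _ _) ht0
    have hHd : ⟪(H j) d, d⟫ ≤ t ^ 2 * (M * R₀ ^ 2) := by
      have h1 : ⟪(H j) d, d⟫ ≤ ‖(H j) d‖ * ‖d‖ := real_inner_le_norm _ _
      have h2 : ‖(H j) d‖ ≤ M * ‖d‖ :=
        le_trans ((H j).le_opNorm d) (mul_le_mul_of_nonneg_right (hHM j) (norm_nonneg _))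
      have h3 : ‖d‖ ≤ t * R₀ := by
        rw [hddef, norm_smul, Real.norm_eq_abs, abs_of_nonneg ht0]
        exact mul_le_mul_of_nonneg_left hnyx ht0
      nlinarith [norm_nonneg d, norm_nonneg ((H j) d), hM.le,
        mul_nonneg ht0 hR0nonneg, sq_nonneg (‖d‖ - t * R₀)]
    have hxd : xseq j + d = (1 - t) • xseq j + t • y := by
      rw [hddef]; module
    have hconvψ : ψ (xseq j + d) ≤ (((1 - t) * px + t * py : ℝ) : EReal) := by
      rw [hxd]
      have hcv := hψconv (xseq j) y (1 - t) t (by linarith) ht0 (by ring)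
      rw [hpx, hpy] at hcv
      refine hcv.trans_eq ?_
      rw [← EReal.coe_mul, ← EReal.coe_mul, ← EReal.coe_add]
    have hQd : Qm f ψ (H j) (xseq j) d ≤
        ((-((c - Fstar) ^ 2) / (2 * (M * R₀ ^ 2)) : ℝ) : EReal) := by
      show ((⟪gradient f (xseq j), d⟫ + 1 / 2 * ⟪(H j) d, d⟫ : ℝ) : EReal)
          + ψ (xseq j + d) - ψ (xseq j) ≤ _
      rw [hpx]
      have hA : ((⟪gradient f (xseq j), d⟫ + 1 / 2 * ⟪(H j) d, d⟫ : ℝ) : EReal) ≤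
          ((t * (f y - f (xseq j)) + 1 / 2 * (t ^ 2 * (M * R₀ ^ 2)) : ℝ) : EReal) := by
        rw [EReal.coe_le_coe_iff]; nlinarith
      calc _ ≤ ((t * (f y - f (xseq j)) + 1 / 2 * (t ^ 2 * (M * R₀ ^ 2)) : ℝ) : EReal)
            + (((1 - t) * px + t * py : ℝ) : EReal) - ((px : ℝ) : EReal) :=
          EReal.sub_le_sub (add_le_add hA hconvψ) le_rfl
        _ = ((t * (f y - f (xseq j)) + 1 / 2 * (t ^ 2 * (M * R₀ ^ 2))
            + ((1 - t) * px + t * py) - px : ℝ) : EReal) := by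
          rw [← EReal.coe_add, ← EReal.coe_sub]
        _ ≤ _ := by
          rw [EReal.coe_le_coe_iff]
          have hE : t * (f y - f (xseq j)) + 1 / 2 * (t ^ 2 * (M * R₀ ^ 2))
              + ((1 - t) * px + t * py) - px
              = -(t * (c - Fstar)) + t ^ 2 * (M * R₀ ^ 2) / 2 := by
            linear_combination t * hcval - t * hsval
          rw [hE]
          have hts : t * (M * R₀ ^ 2) = c - Fstar := by
            rw [htdef]; exact div_mul_cancel₀ _ hMR.ne'
          rw [le_div_iff₀ (by linarith : (0:ℝ) < 2 * (M * R₀ ^ 2))]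
          have hfin : (-(t * (c - Fstar)) + t ^ 2 * (M * R₀ ^ 2) / 2) * (2 * (M * R₀ ^ 2))
              = -((c - Fstar) ^ 2) := by
            linear_combination (t * (M * R₀ ^ 2) - (c - Fstar)) * hts
          exact le_of_eq hfin
    exact (iInf_le _ d).trans hQd
  have main : ∀ k, k₀ ≤ k → ∃ c : ℝ, Fm f ψ (xseq k) = (c : EReal) ∧
      c - Fstar ≤ 2 * (M * R₀ ^ 2) / (γ * (1 - η) * (∑ t ∈ Finset.Ico k₀ k, α t) + 2) := by
    intro k hk
    induction k, hk using Nat.le_induction with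
    | base =>
      refine ⟨c₀, hc₀, ?_⟩
      rw [Finset.Ico_self, Finset.sum_empty, mul_zero, zero_add]
      linarith
    | succ k hk ih =>
      obtain ⟨c, hc, hb⟩ := ih
      set S := ∑ t ∈ Finset.Ico k₀ k, α t with hSdef
      have hS0 : 0 ≤ S := Finset.sum_nonneg fun t _ => (hα t).1.le
      have hBpos : 0 < γ * (1 - η) * S + 2 := by nlinarith [mul_nonneg hane.le hS0]
      have hBle : 2 * (M * R₀ ^ 2) / (γ * (1 - η) * S + 2) ≤ M * R₀ ^ 2 := by
        rw [div_le_iff₀ hBpos]; nlinarith [mul_nonneg hane.le hS0]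
      have hcle : c - Fstar ≤ M * R₀ ^ 2 := hb.trans hBle
      have hδ0 : 0 ≤ c - Fstar := by
        have h := hFlow (xseq k); rw [hc] at h
        have := EReal.coe_le_coe_iff.1 h; linarith
      have hQ := hkey k c hc hcle
      have hD : Dm f ψ (xseq k) (dseq k) ≤
          (((1 - η) * (-((c - Fstar) ^ 2) / (2 * (M * R₀ ^ 2))) : ℝ) : EReal) := by
        refine (hDleQ k).trans ((happrox k).trans ?_)
        rw [EReal.coe_mul]
        exact mul_le_mul_of_nonneg_left hQ (by exact_mod_cast (by linarith : (0:ℝ) ≤ 1 - η))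
      have hF1 : Fm f ψ (xseq (k + 1)) ≤
          ((c + (α k * γ) * ((1 - η) * (-((c - Fstar) ^ 2) / (2 * (M * R₀ ^ 2)))) : ℝ) : EReal) := by
        refine (harmijo k).trans ?_
        rw [EReal.coe_add, EReal.coe_mul, hc]
        exact add_le_add_right
          (mul_le_mul_of_nonneg_left hD
            (by exact_mod_cast mul_nonneg (hα k).1.le hγ0.le)) _
      have htop : Fm f ψ (xseq (k + 1)) ≠ ⊤ := by
        intro h; rw [h] at hF1; exact EReal.coe_ne_top _ (top_le_iff.1 hF1)
      obtain ⟨c', hc'⟩ : ∃ r : ℝ, Fm f ψ (xseq (k + 1)) = (r : EReal) :=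
        ⟨_, (EReal.coe_toReal htop (hFbot _)).symm⟩
      have hc'le : c' ≤ c + (α k * γ) * ((1 - η) * (-((c - Fstar) ^ 2) / (2 * (M * R₀ ^ 2)))) := by
        rw [hc'] at hF1; exact_mod_cast hF1
      refine ⟨c', hc', ?_⟩
      rw [Finset.sum_Ico_succ_top hk]
      have haα : γ * (1 - η) * α k ≤ 1 := by
        have h1 : γ * (1 - η) ≤ 1 := by nlinarith
        nlinarith [(hα k).1, (hα k).2, hane]
      have hδ' : c' - Fstar ≤ (c - Fstar)
          - γ * (1 - η) * α k * (c - Fstar) ^ 2 / (2 * (M * R₀ ^ 2)) := by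
        have heq : (α k * γ) * ((1 - η) * (-((c - Fstar) ^ 2) / (2 * (M * R₀ ^ 2))))
            = -(γ * (1 - η) * α k * (c - Fstar) ^ 2 / (2 * (M * R₀ ^ 2))) := by ring
        rw [heq] at hc'le
        linarith
      exact rate_step (2 * (M * R₀ ^ 2)) (γ * (1 - η)) (α k) (c - Fstar) (c' - Fstar) S
        (by linarith) hane (hα k).1 haα hδ0 hS0 hb hδ'
  intro k hk
  obtain ⟨c, hc, hb⟩ := main k hk
  rw [hc, ← EReal.coe_sub, EReal.coe_le_coe_iff]
  calc c - Fstar ≤ 2 * (M * R₀ ^ 2) / (γ * (1 - η) * (∑ t ∈ Finset.Ico k₀ k, α t) + 2) := hb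
    _ = 2 * M * R₀ ^ 2 / (γ * (1 - η) * (∑ t ∈ Finset.Ico k₀ k, α t) + 2) := by ring_nf
end
end

section
/- Under the setting of the sublinear-rate theorem for convex F — sequences x^{k+1} = x^k + α_k d^k with α_k ∈ (0,1], symmetric positive semidefinite H_k with ‖H_k‖ ≤ M, directions d^k satisfying Q_k(d^k) ≤ (1 − η)Q_k*, Armijo decrease F(x^{k+1}) ≤ F(x^k) + α_kγΔ_k at every iteration, and R₀ = sup{dist(x, Ω) : F(x) ≤ F(x⁰)} < ∞ — if additionally α_k ≥ ᾱ for some ᾱ > 0 and all k, then the first index k₀ with F(x^{k₀}) − F* < M R₀² satisfies k₀ ≤ max{0, 1 + (2/(γ(1 − η)ᾱ))·log((F(x⁰) − F*)/(M R₀²))}. -/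
/-
Setting: minimize F = f + ψ over ℝⁿ (modeled as `EuclideanSpace ℝ (Fin n)`), where
f : ℝⁿ → ℝ is smooth and ψ : ℝⁿ → ℝ ∪ {+∞} (modeled as `EReal`-valued, never ⊥)
is convex, proper and closed.  The quadratic model at x with symmetric operator H is
Q(d) = ⟪∇f(x), d⟫ + (1/2)⟪H d, d⟫ + ψ(x+d) − ψ(x), and Δ(d) = ⟪∇f(x), d⟫ + ψ(x+d) − ψ(x).
-/

open scoped RealInnerProductSpace
open Set Filter Topology

noncomputable section

lemma grad_convex_ineq {n : ℕ} (f : EuclideanSpace ℝ (Fin n) → ℝ)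
    (hf : Differentiable ℝ f) (hfc : ConvexOn ℝ Set.univ f)
    (x y : EuclideanSpace ℝ (Fin n)) :
    ⟪gradient f x, y - x⟫ ≤ f y - f x := by
  set v := y - x with hv
  have h1 : HasDerivAt (fun t : ℝ => x + t • v) v 0 := by
    simpa using ((hasDerivAt_id (0:ℝ)).smul_const v).const_add x
  have h2 : HasDerivAt (fun t : ℝ => f (x + t • v)) (fderiv ℝ f x v) 0 := by
    have h0 : HasFDerivAt f (fderiv ℝ f x) (x + (0:ℝ) • v) := by
      simpa using (hf x).hasFDerivAt
    exact h0.comp_hasDerivAt (0:ℝ) h1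
  have hg : ConvexOn ℝ Set.univ (fun t : ℝ => f (x + t • v)) := by
    have := hfc.comp_affineMap (AffineMap.lineMap x (x + v) : ℝ →ᵃ[ℝ] EuclideanSpace ℝ (Fin n))
    have he : (f ∘ (AffineMap.lineMap x (x + v) : ℝ →ᵃ[ℝ] EuclideanSpace ℝ (Fin n)))
        = fun t : ℝ => f (x + t • v) := by
      funext t; simp [AffineMap.lineMap_apply, add_comm]
    rw [he] at this
    simpa using this
  have hsl := hg.le_slope_of_hasDerivAt (Set.mem_univ (0:ℝ)) (Set.mem_univ (1:ℝ)) zero_lt_one h2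
  have hslope : slope (fun t : ℝ => f (x + t • v)) 0 1 = f y - f x := by
    simp [slope, hv]
  rw [hslope] at hsl
  have hgrad : ⟪gradient f x, v⟫ = fderiv ℝ f x v := by
    simp [gradient, InnerProductSpace.toDual_symm_apply]
  rw [hv] at hgrad ⊢
  rw [hgrad]; exact hsl

lemma ereal_shift {a c : ℝ} {b : EReal} (h : (a:EReal) + b = (c:EReal)) :
    b = ((c - a : ℝ) : EReal) := by
  induction b using EReal.rec with
  | bot => simp at h
  | coe b =>
      rw [← EReal.coe_add, EReal.coe_eq_coe_iff] at h
      rw [EReal.coe_eq_coe_iff]; linarith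
  | top => simp at h
set_option maxHeartbeats 2000000 in
/-- In the setting of the sublinear-rate theorem for convex F, if in
addition α_k ≥ ᾱ > 0 for all k, then the first index k₀ with F(x^{k₀}) − F* < M R₀²
satisfies k₀ ≤ max{0, 1 + (2/(γ(1 − η)ᾱ))·log((F(x⁰) − F*)/(M R₀²))}. -/
theorem bound_on_first_index {n : ℕ}
    (f : EuclideanSpace ℝ (Fin n) → ℝ) (ψ : EuclideanSpace ℝ (Fin n) → EReal)
    (L M γ η R₀ Fstar F0 abar : ℝ)
    (xseq dseq : ℕ → EuclideanSpace ℝ (Fin n)) (α : ℕ → ℝ)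
    (H : ℕ → (EuclideanSpace ℝ (Fin n) →L[ℝ] EuclideanSpace ℝ (Fin n)))
    (hf : Differentiable ℝ f) (hfconv : ConvexOn ℝ Set.univ f)
    (hL : 0 < L) (hlip : ∀ y z, ‖gradient f y - gradient f z‖ ≤ L * ‖y - z‖)
    (hψconv : ConvexE ψ) (hψproper : ProperPsi ψ) (hψclosed : ClosedPsi ψ)
    (hΩ : (SolSet f ψ).Nonempty)
    (hFstar : ∀ y ∈ SolSet f ψ, Fm f ψ y = (Fstar : EReal))
    (hM : 0 < M) (hγ0 : 0 < γ) (hγ1 : γ < 1) (hη0 : 0 ≤ η) (hη1 : η < 1)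
    (hR0 : IsLUB {r : ℝ | ∃ y, Fm f ψ y ≤ Fm f ψ (xseq 0) ∧
        r = Metric.infDist y (SolSet f ψ)} R₀)
    (hstep : ∀ k, xseq (k + 1) = xseq k + α k • dseq k)
    (hα : ∀ k, α k ∈ Set.Ioc (0 : ℝ) 1)
    (hHsymm : ∀ k, SymmCLM (H k))
    (hHpsd : ∀ k, ∀ e : EuclideanSpace ℝ (Fin n), 0 ≤ ⟪(H k) e, e⟫)
    (hHM : ∀ k, ‖H k‖ ≤ M)
    (happrox : ∀ k, Qm f ψ (H k) (xseq k) (dseq k) ≤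
        ((1 - η : ℝ) : EReal) * ⨅ e, Qm f ψ (H k) (xseq k) e)
    (harmijo : ∀ k, Fm f ψ (xseq (k + 1)) ≤
        Fm f ψ (xseq k) + ((α k * γ : ℝ) : EReal) * Dm f ψ (xseq k) (dseq k))
    (habar : 0 < abar) (hαlb : ∀ k, abar ≤ α k)
    (hF0 : Fm f ψ (xseq 0) = (F0 : EReal))
    (k₀ : ℕ)
    (hk₀ : IsLeast {k : ℕ |
        Fm f ψ (xseq k) - (Fstar : EReal) < ((M * R₀ ^ 2 : ℝ) : EReal)} k₀) :
    (k₀ : ℝ) ≤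
      max 0 (1 + 2 / (γ * (1 - η) * abar) * Real.log ((F0 - Fstar) / (M * R₀ ^ 2))) := by
  classical
  obtain ⟨xb0, hxb0⟩ := hΩ
  have hFge : ∀ z, (Fstar : EReal) ≤ Fm f ψ z := fun z => (hFstar xb0 hxb0) ▸ hxb0 z
  have hFnebot : ∀ z, Fm f ψ z ≠ ⊥ := by
    intro z h
    rw [Fm, EReal.add_eq_bot_iff] at h
    rcases h with h | h
    · exact EReal.coe_ne_bot _ h
    · exact hψproper.1 z h
  -- Δ_k is nonpositive whenever F(x^k) is finite
  have hDnonpos : ∀ k (c : ℝ), Fm f ψ (xseq k) = (c : EReal) →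
      Dm f ψ (xseq k) (dseq k) ≤ 0 := by
    intro k c hc
    have hpsik : ψ (xseq k) = ((c - f (xseq k) : ℝ) : EReal) := ereal_shift hc
    have hQ0 : Qm f ψ (H k) (xseq k) 0 = 0 := by
      simp [Qm, hpsik, ← EReal.coe_add, ← EReal.coe_sub]
    have hQinf : (⨅ e, Qm f ψ (H k) (xseq k) e) ≤ 0 := hQ0 ▸ iInf_le _ 0
    have hQd : Qm f ψ (H k) (xseq k) (dseq k) ≤ 0 := by
      refine (happrox k).trans ?_
      calc ((1 - η : ℝ) : EReal) * ⨅ e, Qm f ψ (H k) (xseq k) e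
          ≤ ((1 - η : ℝ) : EReal) * 0 :=
            mul_le_mul_of_nonneg_left hQinf (by exact_mod_cast (by linarith : (0:ℝ) ≤ 1 - η))
        _ = 0 := mul_zero _
    refine le_trans ?_ hQd
    rw [Dm, Qm]
    refine EReal.sub_le_sub (add_le_add_left ?_ _) le_rfl
    rw [EReal.coe_le_coe_iff]
    have := hHpsd k (dseq k)
    linarith
  -- one-step decrease of F
  have key1 : ∀ k (c : ℝ), Fm f ψ (xseq k) = (c : EReal) →
      Fm f ψ (xseq (k + 1)) ≤ (c : EReal) := by
    intro k c hc
    have hD := hDnonpos k c hc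
    have hmul : ((α k * γ : ℝ) : EReal) * Dm f ψ (xseq k) (dseq k) ≤ 0 := by
      calc ((α k * γ : ℝ) : EReal) * Dm f ψ (xseq k) (dseq k)
          ≤ ((α k * γ : ℝ) : EReal) * 0 := by
            refine mul_le_mul_of_nonneg_left hD ?_
            exact_mod_cast mul_nonneg (hα k).1.le hγ0.le
        _ = 0 := mul_zero _
    calc Fm f ψ (xseq (k + 1))
        ≤ Fm f ψ (xseq k) + ((α k * γ : ℝ) : EReal) * Dm f ψ (xseq k) (dseq k) := harmijo k
      _ ≤ (c : EReal) + 0 := by rw [hc]; exact add_le_add_right hmul _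
      _ = (c : EReal) := add_zero _
  -- every F(x^k) is a real number
  have hφex : ∀ k, ∃ c : ℝ, Fm f ψ (xseq k) = (c : EReal) := by
    intro k
    induction k with
    | zero => exact ⟨F0, hF0⟩
    | succ k ih =>
        obtain ⟨c, hc⟩ := ih
        have h1 := key1 k c hc
        have hne : Fm f ψ (xseq (k + 1)) ≠ ⊤ := by
          intro h; rw [h, top_le_iff] at h1; exact EReal.coe_ne_top c h1
        exact ⟨(Fm f ψ (xseq (k + 1))).toReal,
          (EReal.coe_toReal hne (hFnebot _)).symm⟩
  choose φ hφ using hφex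
  have hφ0 : φ 0 = F0 := by
    have := (hφ 0).symm.trans hF0
    exact EReal.coe_eq_coe_iff.1 this
  have hdec : ∀ k, φ (k + 1) ≤ φ k := by
    intro k
    have := key1 k (φ k) (hφ k)
    rw [hφ (k + 1)] at this
    exact EReal.coe_le_coe_iff.1 this
  have hmono : ∀ k, φ k ≤ F0 := by
    intro k
    induction k with
    | zero => rw [hφ0]
    | succ k ih => exact (hdec k).trans ih
  have hFsle : ∀ k, Fstar ≤ φ k := by
    intro k
    have := hFge (xseq k)
    rw [hφ k] at this
    exact EReal.coe_le_coe_iff.1 this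
  -- the crucial contraction step
  have key2 : ∀ k, M * R₀ ^ 2 ≤ φ k - Fstar →
      φ (k + 1) - Fstar ≤ (1 - α k * γ * (1 - η) / 2) * (φ k - Fstar) := by
    intro k hbig
    set x := xseq k with hx
    have hpsik : ψ x = ((φ k - f x : ℝ) : EReal) := ereal_shift (hφ k)
    have hdist : Metric.infDist x (SolSet f ψ) ≤ R₀ := by
      refine hR0.1 ⟨x, ?_, rfl⟩
      rw [hφ k, hφ 0, hφ0]
      exact_mod_cast hmono k
    set K := α k * γ * (1 - η) with hK
    have hKpos : 0 < K := by
      have := (hα k).1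
      have : 0 < α k * γ := mul_pos this hγ0
      nlinarith
    -- the ε-approximate inequality
    have hstepε : ∀ ε : ℝ, 0 < ε →
        φ (k + 1) ≤ φ k + K * (Fstar - φ k + M / 2 * (R₀ + ε) ^ 2) := by
      intro ε hε
      have hlt : Metric.infDist x (SolSet f ψ) < R₀ + ε := by linarith
      obtain ⟨xb, hxbΩ, hxbd⟩ := (Metric.infDist_lt_iff ⟨xb0, hxb0⟩).1 hlt
      have hpsixb : ψ xb = ((Fstar - f xb : ℝ) : EReal) := ereal_shift (hFstar xb hxbΩ)
      set e := xb - x with he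
      have hxe : x + e = xb := by rw [he]; abel
      -- bound Q(e)
      have hQe : Qm f ψ (H k) x e ≤ ((Fstar - φ k + M / 2 * (R₀ + ε) ^ 2 : ℝ) : EReal) := by
        rw [Qm, hxe, hpsixb, hpsik, ← EReal.coe_add, ← EReal.coe_sub, EReal.coe_le_coe_iff]
        have hg : ⟪gradient f x, e⟫ ≤ f xb - f x := grad_convex_ineq f hf hfconv x xb
        have hnorm : ‖e‖ < R₀ + ε := by
          rw [he, ← dist_eq_norm xb x, dist_comm]
          exact hxbd
        have hnorm0 : (0:ℝ) ≤ ‖e‖ := norm_nonneg _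
        have hHe : ⟪(H k) e, e⟫ ≤ M * ‖e‖ ^ 2 := by
          have h1 : ⟪(H k) e, e⟫ ≤ ‖(H k) e‖ * ‖e‖ := real_inner_le_norm _ _
          have h2 : ‖(H k) e‖ ≤ ‖H k‖ * ‖e‖ := (H k).le_opNorm e
          have h3 : ‖H k‖ * ‖e‖ ≤ M * ‖e‖ := mul_le_mul_of_nonneg_right (hHM k) hnorm0
          nlinarith
        have hMe : M * ‖e‖ ^ 2 ≤ M * (R₀ + ε) ^ 2 := by
          have hsq : ‖e‖ ^ 2 ≤ (R₀ + ε) ^ 2 := by nlinarith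
          exact mul_le_mul_of_nonneg_left hsq hM.le
        nlinarith
      have hQinf : (⨅ e', Qm f ψ (H k) x e')
          ≤ ((Fstar - φ k + M / 2 * (R₀ + ε) ^ 2 : ℝ) : EReal) :=
        le_trans (iInf_le _ e) hQe
      have hr0 : (0:ℝ) ≤ 1 - η := by linarith
      have hQd : Qm f ψ (H k) x (dseq k)
          ≤ (((1 - η) * (Fstar - φ k + M / 2 * (R₀ + ε) ^ 2) : ℝ) : EReal) := by
        refine (happrox k).trans ?_
        rw [EReal.coe_mul]
        exact mul_le_mul_of_nonneg_left hQinf (by exact_mod_cast hr0)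
      have hDle : Dm f ψ x (dseq k)
          ≤ (((1 - η) * (Fstar - φ k + M / 2 * (R₀ + ε) ^ 2) : ℝ) : EReal) := by
        refine le_trans ?_ hQd
        rw [Dm, Qm]
        refine EReal.sub_le_sub (add_le_add_left ?_ _) le_rfl
        rw [EReal.coe_le_coe_iff]
        have := hHpsd k (dseq k)
        linarith
      have harm := harmijo k
      rw [hφ (k + 1), hφ k] at harm
      have h2 : ((α k * γ : ℝ) : EReal) * Dm f ψ x (dseq k)
          ≤ ((α k * γ * ((1 - η) * (Fstar - φ k + M / 2 * (R₀ + ε) ^ 2)) : ℝ) : EReal) := by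
        rw [EReal.coe_mul]
        exact mul_le_mul_of_nonneg_left hDle
          (by exact_mod_cast mul_nonneg (hα k).1.le hγ0.le)
      have h3 : ((φ (k + 1) : ℝ) : EReal)
          ≤ ((φ k + α k * γ * ((1 - η) * (Fstar - φ k + M / 2 * (R₀ + ε) ^ 2)) : ℝ) : EReal) := by
        refine harm.trans ?_
        rw [EReal.coe_add]
        exact add_le_add_right h2 _
      rw [EReal.coe_le_coe_iff] at h3
      rw [hK]; linarith
    -- pass to the limit ε → 0⁺
    have hlimit : φ (k + 1) ≤ φ k + K * (Fstar - φ k + M / 2 * R₀ ^ 2) := by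
      have hcont : Filter.Tendsto
          (fun ε : ℝ => φ k + K * (Fstar - φ k + M / 2 * (R₀ + ε) ^ 2))
          (nhdsWithin 0 (Set.Ioi 0))
          (nhds (φ k + K * (Fstar - φ k + M / 2 * (R₀ + 0) ^ 2))) := by
        refine Filter.Tendsto.mono_left ?_ nhdsWithin_le_nhds
        have hc : Continuous (fun ε : ℝ => φ k + K * (Fstar - φ k + M / 2 * (R₀ + ε) ^ 2)) := by
          fun_prop
        exact hc.tendsto 0
      rw [add_zero] at hcont
      refine ge_of_tendsto hcont ?_
      filter_upwards [self_mem_nhdsWithin] with ε hε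
      exact hstepε ε hε
    have hM2 : M / 2 * R₀ ^ 2 ≤ (φ k - Fstar) / 2 := by linarith
    have h6 : Fstar - φ k + M / 2 * R₀ ^ 2 ≤ -(φ k - Fstar) / 2 := by linarith
    have h7 : K * (Fstar - φ k + M / 2 * R₀ ^ 2) ≤ K * (-(φ k - Fstar) / 2) :=
      mul_le_mul_of_nonneg_left h6 hKpos.le
    have h8 : (1 - α k * γ * (1 - η) / 2) * (φ k - Fstar)
        = φ k - Fstar + K * (-(φ k - Fstar) / 2) := by rw [hK]; ring
    linarith
  -- now conclude
  rcases Nat.eq_zero_or_pos k₀ with hk0 | hk0pos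
  · rw [hk0]; exact_mod_cast le_max_left 0 _
  -- k₀ ≥ 1
  have hMR0pos : 0 < M * R₀ ^ 2 := by
    have hmem := hk₀.1
    rw [Set.mem_setOf_eq, hφ k₀, ← EReal.coe_sub, EReal.coe_lt_coe_iff] at hmem
    have := hFsle k₀
    linarith
  have hnotin : ∀ i, i < k₀ → M * R₀ ^ 2 ≤ φ i - Fstar := by
    intro i hi
    by_contra hcon
    push_neg at hcon
    have : i ∈ {k : ℕ | Fm f ψ (xseq k) - (Fstar : EReal) < ((M * R₀ ^ 2 : ℝ) : EReal)} := by
      rw [Set.mem_setOf_eq, hφ i, ← EReal.coe_sub, EReal.coe_lt_coe_iff]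
      exact hcon
    exact absurd (hk₀.2 this) (not_le.2 hi)
  set P := γ * (1 - η) * abar / 2 with hP
  have hη' : (0:ℝ) < 1 - η := by linarith
  have hPpos : 0 < P := by
    rw [hP]; positivity
  have habar1 : abar ≤ 1 := le_trans (hαlb 0) (hα 0).2
  have hPlt1 : P < 1 := by
    have h1 : γ * (1 - η) ≤ 1 * 1 :=
      mul_le_mul hγ1.le (by linarith) hη'.le zero_le_one
    have h2 : γ * (1 - η) * abar ≤ 1 * 1 :=
      mul_le_mul (by linarith) habar1 habar.le (by linarith)
    rw [hP]; linarith
  set ρ := 1 - P with hρ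
  have hρpos : 0 < ρ := by rw [hρ]; linarith
  have hρlt1 : ρ < 1 := by rw [hρ]; linarith
  obtain ⟨j, hj⟩ : ∃ j, k₀ = j + 1 := ⟨k₀ - 1, (Nat.succ_pred_eq_of_pos hk0pos).symm⟩
  -- contraction at each step before k₀
  have hstepρ : ∀ i, i < k₀ → φ (i + 1) - Fstar ≤ ρ * (φ i - Fstar) := by
    intro i hi
    have h1 := key2 i (hnotin i hi)
    have hγη : 0 ≤ γ * (1 - η) := mul_nonneg hγ0.le hη'.le
    have h2 : 1 - α i * γ * (1 - η) / 2 ≤ ρ := by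
      rw [hρ, hP]
      have h2a : γ * (1 - η) * abar ≤ γ * (1 - η) * α i :=
        mul_le_mul_of_nonneg_left (hαlb i) hγη
      linarith
    have h3 : 0 ≤ φ i - Fstar := le_trans hMR0pos.le (hnotin i hi)
    exact h1.trans (mul_le_mul_of_nonneg_right h2 h3)
  have hgeom : ∀ i, i ≤ j → φ i - Fstar ≤ ρ ^ i * (F0 - Fstar) := by
    intro i hi
    induction i with
    | zero => rw [pow_zero, one_mul, hφ0]
    | succ i ih =>
        have hij : i ≤ j := Nat.le_of_succ_le hi
        have hik : i < k₀ := by omega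
        have h1 := hstepρ i hik
        have h2 := ih hij
        calc φ (i + 1) - Fstar ≤ ρ * (φ i - Fstar) := h1
          _ ≤ ρ * (ρ ^ i * (F0 - Fstar)) := mul_le_mul_of_nonneg_left h2 hρpos.le
          _ = ρ ^ (i + 1) * (F0 - Fstar) := by ring
  have hjlt : j < k₀ := by omega
  have hkey : M * R₀ ^ 2 ≤ ρ ^ j * (F0 - Fstar) :=
    le_trans (hnotin j hjlt) (hgeom j le_rfl)
  have hF0pos : 0 < F0 - Fstar := by
    have h0 : M * R₀ ^ 2 ≤ φ 0 - Fstar := hnotin 0 hk0pos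
    rw [hφ0] at h0
    linarith
  -- logarithms
  have hlog1 : Real.log (M * R₀ ^ 2) ≤ Real.log (ρ ^ j * (F0 - Fstar)) :=
    Real.log_le_log hMR0pos hkey
  have hlog2 : Real.log (ρ ^ j * (F0 - Fstar)) = j * Real.log ρ + Real.log (F0 - Fstar) := by
    rw [Real.log_mul (pow_ne_zero j hρpos.ne') hF0pos.ne', Real.log_pow]
  have hlog3 : Real.log ρ ≤ -P := by
    have := Real.log_le_sub_one_of_pos hρpos
    rw [hρ] at this ⊢
    linarith
  have hjP : (j : ℝ) * P ≤ Real.log (F0 - Fstar) - Real.log (M * R₀ ^ 2) := by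
    have hj0 : (0:ℝ) ≤ (j:ℝ) := Nat.cast_nonneg j
    have : (j:ℝ) * Real.log ρ ≤ (j:ℝ) * (-P) := mul_le_mul_of_nonneg_left hlog3 hj0
    rw [hlog2] at hlog1
    linarith
  have hlogdiv : Real.log ((F0 - Fstar) / (M * R₀ ^ 2))
      = Real.log (F0 - Fstar) - Real.log (M * R₀ ^ 2) :=
    Real.log_div hF0pos.ne' hMR0pos.ne'
  set Lg := Real.log ((F0 - Fstar) / (M * R₀ ^ 2)) with hLg
  have hjL : (j : ℝ) * P ≤ Lg := by rw [hlogdiv]; exact hjP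
  have hfin : (k₀ : ℝ) ≤ 1 + 2 / (γ * (1 - η) * abar) * Lg := by
    have hjle : (j : ℝ) ≤ Lg / P := (le_div_iff₀ hPpos).2 hjL
    have hdiveq : Lg / P = 2 / (γ * (1 - η) * abar) * Lg := by
      rw [hP]; field_simp
    rw [hj]
    push_cast
    rw [hdiveq] at hjle
    linarith
  exact le_trans hfin (le_max_right _ _)
end
end
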